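/- Let n ≥ 2, let a₂, …, aₙ ∈ ℂ, and let β ∈ ℂ with β ≠ 0. Suppose η, ζ ∈ ℂ with ζ ≠ 0 satisfy the cyclic monopole spectral curve equation ηⁿ + a₂η^{n−2}ζ² + a₃η^{n−3}ζ³ + … + aₙζⁿ + βζ^{2n} + (−1)ⁿ conj(β) = 0. Set x = η/ζ and y = βζⁿ − (−1)ⁿ conj(β) ζ^{−n}. Then y² = (xⁿ + a₂x^{n−2} + a₃x^{n−3} + … + aₙ)² − 4(−1)ⁿ|β|², i.e. (x,y) lies on the hyperelliptic spectral curve of sl(n) affine Toda theory. -/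

import Mathlib

open Complex Finset

/-- If `(η,ζ)` with `ζ ≠ 0` lies on the cyclic monopole spectral curve
`ηⁿ + a₂η^{n−2}ζ² + … + aₙζⁿ + βζ^{2n} + (−1)ⁿ conj(β) = 0`, then with `x = η/ζ` and
`y = βζⁿ − (−1)ⁿ conj(β) ζ^{−n}` one has
`y² = (xⁿ + a₂x^{n−2} + … + aₙ)² − 4(−1)ⁿ|β|²`, i.e. `(x,y)` lies on the hyperelliptic
spectral curve of `sl(n)` affine Toda theory. -/
theorem stmt5 (n : ℕ) (hn : 2 ≤ n) (a : ℕ → ℂ) (β : ℂ) (hβ : β ≠ 0)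
    (η ζ : ℂ) (hζ : ζ ≠ 0)
    (hcurve : η ^ n + (∑ r ∈ Finset.Icc 2 n, a r * η ^ (n - r) * ζ ^ r)
        + β * ζ ^ (2 * n) + (-1) ^ n * (starRingEnd ℂ) β = 0) :
    (β * ζ ^ n - (-1) ^ n * (starRingEnd ℂ) β / ζ ^ n) ^ 2
      = ((η / ζ) ^ n + ∑ r ∈ Finset.Icc 2 n, a r * (η / ζ) ^ (n - r)) ^ 2
        - 4 * (-1) ^ n * (β * (starRingEnd ℂ) β) := by
  have hζn : ζ ^ n ≠ 0 := pow_ne_zero _ hζ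
  have hsum : ∑ r ∈ Finset.Icc 2 n, a r * (η / ζ) ^ (n - r)
      = (∑ r ∈ Finset.Icc 2 n, a r * η ^ (n - r) * ζ ^ r) / ζ ^ n := by
    rw [Finset.sum_div]
    refine Finset.sum_congr rfl fun r hr => ?_
    have hrn : r ≤ n := (Finset.mem_Icc.mp hr).2
    have : ζ ^ (n - r) * ζ ^ r = ζ ^ n := by
      rw [← pow_add, Nat.sub_add_cancel hrn]
    field_simp [div_pow]
    rw [div_pow, ← this]
    field_simp
  have key : (η / ζ) ^ n + ∑ r ∈ Finset.Icc 2 n, a r * (η / ζ) ^ (n - r)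
      = -(β * ζ ^ n + (-1) ^ n * (starRingEnd ℂ) β / ζ ^ n) := by
    rw [hsum, div_pow]
    field_simp
    have h2n : ζ ^ (2 * n) = ζ ^ n * ζ ^ n := by rw [two_mul, pow_add]
    linear_combination hcurve - β * h2n
  rw [key]
  have : (-1 : ℂ) ^ n * (-1) ^ n = 1 := by
    rw [← pow_add, ← two_mul, pow_mul]; norm_num
  field_simp
  ring_nf
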